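/- arXiv:2101.11175 — 6 statements merged into one kernel-verified Lean document; each statement's English description precedes it below -/
import Mathlib

section
/- Let k, j, l be natural numbers with k ≥ j ≥ 1 and 2^(l-1) ≤ j < 2^l. Then there exists a natural number m with m < j such that j − m is 2-dominated by k + j − 2m (i.e. Nat.land (j − m) (k + j − 2m) = j − m) if and only if 2^l does not divide k − j. -/
private lemma land_eq_left_iff (a b : ℕ) :
    Nat.land a b = a ↔ ∀ i, a.testBit i = true → b.testBit i = true := by
  constructor
  · intro h i hi
    have h' : a &&& b = a := h
    have := congrArg (fun x => Nat.testBit x i) h'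
    simp only [Nat.testBit_land, hi, Bool.true_and] at this
    exact this
  · intro h
    apply Nat.eq_of_testBit_eq
    intro i
    show (a &&& b).testBit i = a.testBit i
    rw [Nat.testBit_land]
    cases ha : a.testBit i
    · simp
    · simp [h i ha]

private lemma testBit_congr_mod {x y i : ℕ} (h : x % 2 ^ (i + 1) = y % 2 ^ (i + 1)) :
    x.testBit i = y.testBit i := by
  have hx : x.testBit i = (x % 2 ^ (i + 1)).testBit i := by
    rw [Nat.testBit_mod_two_pow]; simp
  have hy : y.testBit i = (y % 2 ^ (i + 1)).testBit i := by
    rw [Nat.testBit_mod_two_pow]; simp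
  rw [hx, hy, h]

/-- Forward direction core: if `2^l ∣ n` and `0 < d < 2^l`, `d` is not a submask of `n + 2d`. -/
private lemma no_submask {n d l : ℕ} (hn : 2 ^ l ∣ n) (hd : 0 < d) (hdl : d < 2 ^ l) :
    Nat.land d (n + 2 * d) ≠ d := by
  intro h
  rw [land_eq_left_iff] at h
  -- key: for i < l, testBit (n + 2d) i = testBit (2d) i
  have key : ∀ i, i < l → (n + 2 * d).testBit i = (2 * d).testBit i := by
    intro i hi
    apply testBit_congr_mod
    have hdvd : 2 ^ (i + 1) ∣ n := dvd_trans (pow_dvd_pow 2 hi) hn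
    obtain ⟨c, hc⟩ := hdvd
    rw [hc, Nat.mul_add_mod]
  -- all bits of d below l are false, by strong induction
  have bits : ∀ i, i < l → d.testBit i = false := by
    intro i
    induction i using Nat.strong_induction_on with
    | _ i ih =>
      intro hil
      by_contra hb
      have hbt : d.testBit i = true := by
        cases hcase : d.testBit i
        · exact absurd hcase hb
        · rfl
      have h1 : (n + 2 * d).testBit i = true := h i hbt
      rw [key i hil] at h1
      match i, hil, ih, h1 with
      | 0, hil, ih, h1 =>
        simp only [Nat.testBit_zero, decide_eq_true_eq] at h1
        omega
      | (i + 1), hil, ih, h1 =>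
        rw [Nat.testBit_succ] at h1
        have : (2 * d) / 2 = d := by omega
        rw [this] at h1
        have := ih i (Nat.lt_succ_self i) (by omega)
        rw [this] at h1
        exact Bool.false_ne_true h1
  have : d = 0 := by
    apply Nat.eq_of_testBit_eq
    intro i
    rw [Nat.zero_testBit]
    by_cases hi : i < l
    · exact bits i hi
    · exact Nat.testBit_lt_two_pow (lt_of_lt_of_le hdl (Nat.pow_le_pow_right (by norm_num) (by omega)))
  omega

/-- For `k ≥ j ≥ 1` with `2^(l-1) ≤ j < 2^l`, there exists `m < j` with
`j − m` 2-dominated by `k + j − 2m` (i.e. `Nat.land (j − m) (k + j − 2m) = j − m`)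
if and only if `2^l` does not divide `k − j`. -/
theorem stmt0 (k j l : ℕ) (hj1 : 1 ≤ j) (hkj : j ≤ k)
    (hl1 : 2 ^ (l - 1) ≤ j) (hl2 : j < 2 ^ l) :
    (∃ m, m < j ∧ Nat.land (j - m) (k + j - 2 * m) = j - m) ↔ ¬ (2 ^ l ∣ k - j) := by
  have hl0 : 1 ≤ l := by
    by_contra h
    have : l = 0 := by omega
    subst this
    simp at hl2
    omega
  constructor
  · rintro ⟨m, hm, hland⟩ hdvd
    have harith : k + j - 2 * m = (k - j) + 2 * (j - m) := by omega
    rw [harith] at hland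
    exact no_submask hdvd (by omega) (by omega) hland
  · intro hdvd
    -- n := k - j; find lowest i with 2^i ∣ n but ¬ 2^(i+1) ∣ n
    set n := k - j with hn
    have hex : ∃ i, ¬ 2 ^ i ∣ n := ⟨l, hdvd⟩
    set i0 := Nat.find hex with hi0
    have hi0spec : ¬ 2 ^ i0 ∣ n := Nat.find_spec hex
    have hi0pos : 1 ≤ i0 := by
      rcases Nat.eq_zero_or_pos i0 with h | h
      · exfalso; apply hi0spec; rw [h]; simp
      · exact h
    have hi0le : i0 ≤ l := Nat.find_min' hex hdvd
    set i := i0 - 1 with hi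
    have hidvd : 2 ^ i ∣ n := by
      by_contra h
      have := Nat.find_min' hex h
      omega
    have hindvd : ¬ 2 ^ (i + 1) ∣ n := by
      have : i + 1 = i0 := by omega
      rw [this]; exact hi0spec
    have hil : i + 1 ≤ l := by omega
    have hpow : 2 ^ i ≤ j := le_trans (Nat.pow_le_pow_right (by norm_num) (by omega)) hl1
    refine ⟨j - 2 ^ i, by have := Nat.one_le_two_pow (n := i); omega, ?_⟩
    have hjd : j - (j - 2 ^ i) = 2 ^ i := by omega
    have harith : k + j - 2 * (j - 2 ^ i) = n + 2 * 2 ^ i := by omega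
    rw [hjd, harith]
    rw [land_eq_left_iff]
    intro r hr
    rw [Nat.testBit_two_pow] at hr
    have hri : i = r := by simpa using hr
    subst hri
    -- show testBit (n + 2^(i+1)) i = true; equals testBit n i
    have h2 : 2 * 2 ^ i = 2 ^ (i + 1) := by ring
    rw [h2]
    have hmod : (n + 2 ^ (i + 1)) % 2 ^ (i + 1) = n % 2 ^ (i + 1) := by
      simp [Nat.add_mod_right]
    rw [testBit_congr_mod hmod]
    -- testBit n i = true since 2^i ∣ n, ¬2^(i+1) ∣ n
    obtain ⟨c, hc⟩ := hidvd
    rw [Nat.testBit_eq_decide_div_mod_eq]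
    have hdiv : n / 2 ^ i = c := by
      rw [hc]; exact Nat.mul_div_cancel_left c (Nat.pow_pos (by norm_num))
    rw [hdiv]
    have hodd : c % 2 = 1 := by
      by_contra h
      apply hindvd
      have : c % 2 = 0 := by omega
      obtain ⟨e, he⟩ := Nat.dvd_of_mod_eq_zero this
      exact ⟨e, by rw [hc, he, pow_succ]; ring⟩
    simp [hodd]
end

section
/- Let x, y, l be natural numbers with 0 < y < 2^l and x ≡ 2y (mod 2^l). Then y is not 2-dominated by x; i.e. Nat.land y x ≠ y. -/
/-- If `0 < y < 2^l` and `x ≡ 2y (mod 2^l)`, then `y` is not 2-dominated by `x`,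
i.e. `Nat.land y x ≠ y`. -/
theorem stmt1 (x y l : ℕ) (hy0 : 0 < y) (hyl : y < 2 ^ l)
    (hx : x ≡ 2 * y [MOD 2 ^ l]) :
    Nat.land y x ≠ y := by
  intro h
  have h' : y &&& x = y := h
  have hdom : ∀ i, y.testBit i = true → x.testBit i = true := by
    intro i hi
    have := congrArg (fun n => n.testBit i) h'
    simpa [Nat.testBit_land, hi] using this
  have hex : ∃ i, y.testBit i = true := Nat.exists_testBit_of_ne_zero hy0.ne'
  classical
  obtain ⟨i, hi, hmin⟩ : ∃ i, y.testBit i = true ∧ ∀ j < i, y.testBit j = false := by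
    refine ⟨Nat.find hex, Nat.find_spec hex, fun j hj => ?_⟩
    simpa using Nat.find_min hex hj
  have hil : i < l := by
    by_contra hge
    push_neg at hge
    have : y < 2 ^ i := lt_of_lt_of_le hyl (Nat.pow_le_pow_right (by norm_num) hge)
    rw [Nat.testBit_lt_two_pow this] at hi
    exact absurd hi (by simp)
  have hxi : x.testBit i = true := hdom i hi
  have hmod : x % 2 ^ l = (2 * y) % 2 ^ l := hx
  have h2y : (2 * y).testBit i = true := by
    have e1 := Nat.testBit_mod_two_pow x l i
    have e2 := Nat.testBit_mod_two_pow (2 * y) l i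
    rw [hmod, e2] at e1
    simpa [hil, hxi] using e1.symm
  cases i with
  | zero =>
    have hz : (2 * y).testBit 0 = false := by
      simp [Nat.testBit_zero, Nat.mul_mod_right]
    rw [hz] at h2y; exact absurd h2y (by simp)
  | succ j =>
    have hs : (2 * y).testBit (j + 1) = y.testBit j := by
      rw [Nat.testBit_succ, Nat.mul_div_cancel_left y (by norm_num : 0 < 2)]
    rw [hs, hmin j (Nat.lt_succ_self j)] at h2y
    exact absurd h2y (by simp)
end

section
/- Let p be a prime and let j, k be natural numbers with k ≥ j ≥ 2; set n = k + j. Assume p divides exactly one of the 2j−1 consecutive integers n, n−1, …, n−2j+2, and let i be the unique index with 0 ≤ i ≤ 2j−2 and p ∣ n − i. Assume further that either j < p, or j = p and p² divides k + 1. Then for every natural number m ≤ j: j − m is p-dominated by n − 2m if and only if m + j ≤ i or i + 1 ≤ 2m. -/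
/-- `a` is `p`-dominated by `b`: every digit of the base-`p` expansion of `a` is at
most the corresponding digit of the base-`p` expansion of `b`. -/
def pDom (p a b : ℕ) : Prop :=
  ∀ t, (Nat.digits p a).getD t 0 ≤ (Nat.digits p b).getD t 0

lemma getD_digits (p : ℕ) (hp : 1 < p) : ∀ t x, (Nat.digits p x).getD t 0 = x / p ^ t % p := by
  intro t
  induction t with
  | zero =>
    intro x
    rcases Nat.eq_zero_or_pos x with h | h
    · simp [h]
    · rw [Nat.digits_def' hp h]; simp
  | succ t ih =>
    intro x
    rcases Nat.eq_zero_or_pos x with h | h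
    · simp [h]
    · rw [Nat.digits_def' hp h]
      simp only [List.getD_cons_succ, ih, Nat.div_div_eq_div_mul]
      ring_nf

lemma pDom_iff_mod (p a b : ℕ) (hp : 1 < p) (ha0 : 0 < a) (hap : a < p) :
    pDom p a b ↔ a ≤ b % p := by
  constructor
  · intro h
    have := h 0
    rw [getD_digits p hp 0 a, getD_digits p hp 0 b] at this
    simpa [Nat.mod_eq_of_lt hap] using this
  · intro h t
    rw [getD_digits p hp t a, getD_digits p hp t b]
    cases t with
    | zero => simpa [Nat.mod_eq_of_lt hap] using h
    | succ t =>
      have : a / p ^ (t + 1) = 0 := by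
        apply Nat.div_eq_of_lt
        calc a < p := hap
        _ ≤ p ^ (t + 1) := Nat.le_self_pow (by omega) p
      simp [this]

lemma mod_eq_of_dvd_sub (p r x : ℕ) (hr : r < p) (hrx : r ≤ x) (h : p ∣ x - r) :
    x % p = r := by
  obtain ⟨c, hc⟩ := h
  have hx : x = r + p * c := by omega
  rw [hx, Nat.add_mul_mod_self_left, Nat.mod_eq_of_lt hr]

/-- If `p` is prime, `k ≥ j ≥ 2`, `n = k + j`, `p` divides exactly one of the
integers `n, n-1, …, n-2j+2` (namely `n - i` with `0 ≤ i ≤ 2j-2`), and either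
`j < p`, or `j = p` and `p² ∣ k + 1`, then for every `m ≤ j`: `j − m` is
`p`-dominated by `n − 2m` if and only if `m + j ≤ i` or `i + 1 ≤ 2m`. -/
theorem stmt5 (p j k : ℕ) (hp : p.Prime) (hj : 2 ≤ j) (hkj : j ≤ k)
    (n : ℕ) (hn : n = k + j) (i : ℕ) (hi : i ≤ 2 * j - 2) (hdvd : p ∣ n - i)
    (huniq : ∀ t, t ≤ 2 * j - 2 → p ∣ n - t → t = i)
    (hcase : j < p ∨ (j = p ∧ p ^ 2 ∣ k + 1)) :
    ∀ m : ℕ, m ≤ j → (pDom p (j - m) (n - 2 * m) ↔ (m + j ≤ i ∨ i + 1 ≤ 2 * m)) := by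
  have hp1 : 1 < p := hp.one_lt
  have hin : i ≤ n := by omega
  -- i < p
  have hip : i < p := by
    by_contra h
    push_neg at h
    have h2 : p ∣ n - (i - p) := by
      have he : n - (i - p) = (n - i) + p := by omega
      rw [he]; exact dvd_add hdvd dvd_rfl
    have := huniq (i - p) (by omega) h2
    omega
  -- n ≥ i + p
  have hnip : i + p ≤ n := by
    rcases Nat.eq_zero_or_pos (n - i) with h | h
    · omega
    · have := Nat.le_of_dvd h hdvd
      omega
  -- 2j - 2 < i + p
  have hjp2 : 2 * j - 2 < i + p := by
    by_contra h
    push_neg at h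
    have h2 : p ∣ n - (i + p) := by
      have he : n - (i + p) = (n - i) - p := by omega
      rw [he]; exact Nat.dvd_sub hdvd dvd_rfl
    have := huniq (i + p) (by omega) h2
    omega
  intro m hm
  rcases Nat.eq_or_lt_of_le hm with hmj | hmj
  · -- m = j : both sides true
    have h1 : pDom p (j - m) (n - 2 * m) := by
      intro t; rw [getD_digits p hp1 t, getD_digits p hp1 t]
      simp [hmj]
    have h2 : i + 1 ≤ 2 * m := by omega
    tauto
  · rcases Nat.lt_or_ge (j - m) p with hjmp | hjmp
    · -- generic case: j - m < p, m < j
      rw [pDom_iff_mod p (j - m) (n - 2 * m) hp1 (by omega) hjmp]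
      rcases le_or_gt (2 * m) i with h2m | h2m
      · have hmod : (n - 2 * m) % p = i - 2 * m := by
          apply mod_eq_of_dvd_sub p _ _ (by omega) (by omega)
          have he : n - 2 * m - (i - 2 * m) = n - i := by omega
          rw [he]; exact hdvd
        rw [hmod]; omega
      · have hmod : (n - 2 * m) % p = i + p - 2 * m := by
          apply mod_eq_of_dvd_sub p _ _ (by omega) (by omega)
          have he : n - 2 * m - (i + p - 2 * m) = (n - i) - p := by omega
          rw [he]; exact Nat.dvd_sub hdvd dvd_rfl
        rw [hmod]; omega
    · -- j - m ≥ p forces j = p, m = 0 (and p² ∣ k + 1)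
      obtain ⟨hjp, hsq⟩ : j = p ∧ p ^ 2 ∣ k + 1 := by
        rcases hcase with h | h
        · omega
        · exact h
      have hm0 : m = 0 := by omega
      have hieq : i = p - 1 := by omega
      subst hm0
      have hrhs : ¬ (0 + j ≤ i ∨ i + 1 ≤ 2 * 0) := by omega
      simp only [Nat.sub_zero, Nat.mul_zero]
      constructor
      · intro hdom
        exfalso
        obtain ⟨s, hs⟩ := hsq
        have := hdom 1
        rw [getD_digits p hp1 1, getD_digits p hp1 1] at this
        have hjd : j / p ^ 1 % p = 1 := by
          rw [pow_one, hjp, Nat.div_self (by omega), Nat.mod_eq_of_lt hp1]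
        have hnd : n / p ^ 1 % p = 0 := by
          have hps : p ^ 2 * s = p * (p * s) := by ring
          have hne : n = p * (p * s) + (p - 1) := by omega
          rw [pow_one, hne, Nat.mul_add_div (by omega), Nat.div_eq_of_lt (by omega)]
          simp [Nat.mul_mod_right]
        rw [hjd, hnd] at this
        omega
      · intro h; exact absurd h hrhs
end

section
/- Let p be a prime and let k be a natural number with k ≥ p; set j = p and n = k + p. Assume p divides exactly one of the 2p−1 consecutive integers n, n−1, …, n−2p+2 (so necessarily p divides k+1 and the unique index i with p ∣ n − i equals p − 1), and assume p² does not divide k + 1. Then for every natural number m ≤ p: p − m is p-dominated by n − 2m if and only if m = 0 or p ≤ 2m. -/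
lemma digit_eq (p : ℕ) (hp : 2 ≤ p) : ∀ t x, (Nat.digits p x).getD t 0 = x / p ^ t % p := by
  intro t
  induction t with
  | zero =>
    intro x
    rcases Nat.eq_zero_or_pos x with h | h
    · simp [h]
    · rw [Nat.digits_def' hp h]; simp
  | succ t ih =>
    intro x
    rcases Nat.eq_zero_or_pos x with h | h
    · simp [h]
    · rw [Nat.digits_def' hp h]
      simp only [List.getD_cons_succ]
      rw [ih, Nat.div_div_eq_div_mul, ← pow_succ']

lemma pDom_iff (p : ℕ) (hp : 2 ≤ p) (a b : ℕ) :
    pDom p a b ↔ ∀ t, a / p ^ t % p ≤ b / p ^ t % p := by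
  unfold pDom
  simp only [digit_eq p hp]

/-- Let `p` be prime, `k ≥ p`, `n = k + p`. Assume `p` divides exactly one of the
integers `n, n-1, …, n-2p+2`, and that `p²` does not divide `k + 1`. Then for every
`m ≤ p`: `p − m` is `p`-dominated by `n − 2m` if and only if `m = 0` or `p ≤ 2m`. -/
theorem stmt6 (p k : ℕ) (hp : p.Prime) (hkp : p ≤ k)
    (n : ℕ) (hn : n = k + p)
    (hone : ∃! t, t ≤ 2 * p - 2 ∧ p ∣ n - t)
    (hnsq : ¬ p ^ 2 ∣ k + 1) :
    ∀ m : ℕ, m ≤ p → (pDom p (p - m) (n - 2 * m) ↔ (m = 0 ∨ p ≤ 2 * m)) := by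
  have hp2 : 2 ≤ p := hp.two_le
  -- Step 1 : n % p = p - 1
  obtain ⟨t0, _, huniq⟩ := hone
  have hdm := Nat.div_add_mod n p
  have hr : n % p = p - 1 := by
    by_contra h
    have hrlt : n % p < p := Nat.mod_lt _ (by omega)
    have h1 : p ∣ n - n % p := ⟨n / p, by omega⟩
    have h2 : p ∣ n - (n % p + p) := by
      have he : n - (n % p + p) = (n - n % p) - p := by omega
      rw [he]; exact Nat.dvd_sub h1 dvd_rfl
    have e1 := huniq (n % p) ⟨by omega, h1⟩
    have e2 := huniq (n % p + p) ⟨by omega, h2⟩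
    omega
  -- Step 2 : k + 1 = p * s with p ∤ s, 2 ≤ s
  have hkm := Nat.div_add_mod k p
  rw [hn] at hr
  have hkr : k % p = p - 1 := by
    have h2 : (k + p) % p = k % p := Nat.add_mod_right k p
    omega
  set s : ℕ := k / p + 1 with hsdef
  have hs : k + 1 = p * s := by
    have : p * s = p * (k / p) + p := by ring
    omega
  have hps : ¬ p ∣ s := by
    intro ⟨c, hc⟩
    exact hnsq ⟨c, by rw [hs, hc]; ring⟩
  have hs2 : 2 ≤ s := by
    by_contra h
    interval_cases s <;> omega
  have hsmod : 1 ≤ s % p := by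
    rcases Nat.eq_zero_or_pos (s % p) with h | h
    · exact absurd (Nat.dvd_of_mod_eq_zero h) hps
    · omega
  intro m hm
  rw [pDom_iff p hp2]
  constructor
  · intro hd
    by_contra hcon
    push_neg at hcon
    obtain ⟨hm0, hm2⟩ := hcon
    have h0 := hd 0
    simp only [pow_zero, Nat.div_one] at h0
    have hb : n - 2 * m = p * s + (p - 1 - 2 * m) := by
      generalize p * s = B at hs ⊢
      omega
    rw [hb, Nat.mul_add_mod, Nat.mod_eq_of_lt (show p - 1 - 2 * m < p by omega),
      Nat.mod_eq_of_lt (show p - m < p by omega)] at h0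
    omega
  · rintro (rfl | hpm)
    · -- m = 0
      simp only [Nat.sub_zero, Nat.mul_zero]
      have hb : n = p * s + (p - 1) := by
        generalize p * s = B at hs ⊢
        omega
      intro t
      match t with
      | 0 =>
        simp [Nat.mod_self]
      | 1 =>
        rw [pow_one, Nat.div_self (by omega), Nat.mod_eq_of_lt (by omega),
          hb, Nat.mul_add_div (by omega), Nat.div_eq_of_lt (by omega), Nat.add_zero]
        exact hsmod
      | (t + 2) =>
        have hlt : p < p ^ (t + 2) := by
          calc p = p ^ 1 := (pow_one p).symm
          _ < p ^ (t + 2) := Nat.pow_lt_pow_right (by omega) (by omega)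
        rw [Nat.div_eq_of_lt hlt]
        simp
    · -- p ≤ 2m
      rcases eq_or_lt_of_le hm with rfl | hmlt
      · intro t
        simp
      have hm1 : 1 ≤ m := by omega
      intro t
      match t with
      | 0 =>
        simp only [pow_zero, Nat.div_one]
        have hss : s - 1 + 1 = s := by omega
        have h1 : p * (s - 1) + p = p * s := by
          calc p * (s - 1) + p = p * (s - 1 + 1) := by ring
          _ = p * s := by rw [hss]
        have hb : n - 2 * m = p * (s - 1) + (2 * p - 1 - 2 * m) := by
          generalize p * (s - 1) = A at h1 ⊢
          generalize p * s = B at h1 hs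
          omega
        rw [hb, Nat.mul_add_mod, Nat.mod_eq_of_lt (show 2 * p - 1 - 2 * m < p by omega),
          Nat.mod_eq_of_lt (show p - m < p by omega)]
        omega
      | (t + 1) =>
        have hlt : p - m < p ^ (t + 1) := by
          calc p - m < p := by omega
          _ ≤ p ^ (t + 1) := Nat.le_self_pow (by omega) p
        rw [Nat.div_eq_of_lt hlt]
        simp
end

section
/- Let p be an odd prime and let j, n be natural numbers with j ≥ 1 and n ≥ 2j. Then the following are equivalent: (1) for all m with 1 ≤ m ≤ j and all a with 1 ≤ a ≤ m, padicValNat p (n − m − a + 2) = padicValNat p (m − a + 1); (2) for all t with n − 2j + 2 ≤ t ≤ n, p does not divide t. -/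
/-- For an odd prime `p`, `j ≥ 1` and `n ≥ 2j`, the hook-length-valuation
criterion for simultaneous irreducibility of the two-column Weyl modules
is equivalent to `p` dividing none of `n, n-1, …, n-2j+2`. -/
theorem stmt8 (p j n : ℕ) (hp : p.Prime) (hodd : Odd p) (hj : 1 ≤ j)
    (hn : 2 * j ≤ n) :
    (∀ m, 1 ≤ m → m ≤ j → ∀ a, 1 ≤ a → a ≤ m →
        padicValNat p (n - m - a + 2) = padicValNat p (m - a + 1)) ↔
      (∀ t, n - 2 * j + 2 ≤ t → t ≤ n → ¬ p ∣ t) := by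
  have hp2 : 2 < p := by
    rcases hodd with ⟨c, rfl⟩
    have := hp.two_le
    omega
  have hpnd2 : ¬ p ∣ 2 := fun h => by have := Nat.le_of_dvd (by norm_num) h; omega
  constructor
  · intro h t ht1 ht2 hdvd
    have ht0 : 2 ≤ t := le_trans (by omega) ht1
    set d := n - t with hd
    have hdle : d ≤ 2 * j - 2 := by omega
    have htval : 1 ≤ padicValNat p t := by
      haveI : Fact p.Prime := ⟨hp⟩
      exact one_le_padicValNat_of_dvd (by omega) hdvd
    rcases Nat.even_or_odd d with ⟨e, he⟩ | ⟨e, he⟩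
    · -- d = 2e, take m = e+1, a = m, k = 1
      have hm : e + 1 ≤ j := by omega
      have := h (e + 1) (by omega) hm (e + 1) (by omega) le_rfl
      have h1 : n - (e + 1) - (e + 1) + 2 = t := by omega
      have h2 : (e + 1) - (e + 1) + 1 = 1 := by omega
      rw [h1, h2, padicValNat.one] at this
      omega
    · -- d = 2e+1, take m = e+2, a = e+1, k = 2
      have hm : e + 2 ≤ j := by omega
      have := h (e + 2) (by omega) hm (e + 1) (by omega) (by omega)
      have h1 : n - (e + 2) - (e + 1) + 2 = t := by omega
      have h2 : (e + 2) - (e + 1) + 1 = 2 := by omega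
      rw [h1, h2, padicValNat.eq_zero_of_not_dvd hpnd2] at this
      omega
  · intro h m hm1 hmj a ha1 ham
    -- first: p ≥ 2j
    have hpj : 2 * j ≤ p := by
      by_contra hc
      push_neg at hc
      have hp0 : 0 < p := hp.pos
      have hmod : n % p < p := Nat.mod_lt _ hp0
      have hdvd : p ∣ n - n % p := by
        have := Nat.mod_add_div n p
        have heq : n - n % p = p * (n / p) := by omega
        exact heq ▸ dvd_mul_right p (n / p)
      exact h (n - n % p) (by omega) (by omega) hdvd
    have hk : ¬ p ∣ (m - a + 1) := fun hd => by
      have := Nat.le_of_dvd (by omega) hd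
      omega
    have ht : ¬ p ∣ (n - m - a + 2) :=
      h (n - m - a + 2) (by omega) (by omega)
    rw [padicValNat.eq_zero_of_not_dvd hk, padicValNat.eq_zero_of_not_dvd ht]
end

section
/- Let p be a prime and let j, k be natural numbers with k ≥ j ≥ 2; set n = k + j. Assume p divides exactly one of the 2j−1 consecutive integers n, n−1, …, n−2j+2, and let i be the unique index with 0 ≤ i ≤ 2j−2 and p ∣ n − i. Assume further that either j < p, or j = p and p² divides k + 1. Then the number of natural numbers m with m ≤ j such that j − m is p-dominated by n − 2m equals (i − j + 1 if i ≥ j, and 0 otherwise) + (j − ⌊i/2⌋). -/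
lemma digits_getD_eq (p : ℕ) (hp : 2 ≤ p) (b t : ℕ) :
    (Nat.digits p b).getD t 0 = b / p ^ t % p := by
  induction t generalizing b with
  | zero =>
    rcases Nat.eq_zero_or_pos b with rfl | hb
    · simp
    · rw [Nat.digits_def' (by omega : 1 < p) hb]; simp
  | succ t ih =>
    rcases Nat.eq_zero_or_pos b with rfl | hb
    · simp
    · rw [Nat.digits_def' (by omega : 1 < p) hb, List.getD_cons_succ, ih (b / p),
        Nat.div_div_eq_div_mul, ← pow_succ']

lemma pdom_iff_of_lt {p a : ℕ} (hp : 2 ≤ p) (ha : a < p) (b : ℕ) :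
    pDom p a b ↔ a ≤ b % p := by
  constructor
  · intro h
    have h0 := h 0
    rw [digits_getD_eq p hp, digits_getD_eq p hp] at h0
    simpa [Nat.mod_eq_of_lt ha] using h0
  · intro h t
    rw [digits_getD_eq p hp, digits_getD_eq p hp]
    cases t with
    | zero => simpa [Nat.mod_eq_of_lt ha] using h
    | succ t =>
      have hz : a / p ^ (t + 1) = 0 :=
        Nat.div_eq_of_lt (lt_of_lt_of_le ha (Nat.le_self_pow (by omega) p))
      simp [hz]

open Classical in
/-- If `p` is prime, `k ≥ j ≥ 2`, `n = k + j`, `p` divides exactly one of the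
integers `n, n-1, …, n-2j+2` (namely `n - i` with `0 ≤ i ≤ 2j-2`), and either
`j < p`, or `j = p` and `p² ∣ k + 1`, then the number of `m ≤ j` with `j − m`
`p`-dominated by `n − 2m` equals `(i − j + 1 if i ≥ j, else 0) + (j − ⌊i/2⌋)`. -/
theorem stmt11 (p j k : ℕ) (hp : p.Prime) (hj : 2 ≤ j) (hkj : j ≤ k)
    (n : ℕ) (hn : n = k + j) (i : ℕ) (hi : i ≤ 2 * j - 2) (hdvd : p ∣ n - i)
    (huniq : ∀ t, t ≤ 2 * j - 2 → p ∣ n - t → t = i)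
    (hcase : j < p ∨ (j = p ∧ p ^ 2 ∣ k + 1)) :
    ((Finset.range (j + 1)).filter (fun m => pDom p (j - m) (n - 2 * m))).card =
      (if j ≤ i then i - j + 1 else 0) + (j - i / 2) := by
  have hp2 : 2 ≤ p := hp.two_le
  have hjp : j ≤ p := by rcases hcase with h | ⟨h, _⟩ <;> omega
  -- i < p
  have hip : i < p := by
    rcases hcase with h | ⟨hjpe, hsq⟩
    · by_contra hip'
      push_neg at hip'
      have hne : n - (i - p) = (n - i) + p := by omega
      have hdd : p ∣ n - (i - p) := by
        rw [hne]; exact Nat.dvd_add hdvd dvd_rfl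
      have := huniq (i - p) (by omega) hdd
      omega
    · have hd2 : p ∣ n - (p - 1) := by
        have he : n - (p - 1) = k + 1 := by omega
        rw [he]
        exact dvd_trans (dvd_pow_self p (by omega : 2 ≠ 0)) hsq
      have := huniq (p - 1) (by omega) hd2
      omega
  obtain ⟨s, hs⟩ := hdvd
  have hs0 : s ≠ 0 := by
    rintro rfl
    simp at hs
    omega
  obtain ⟨s', rfl⟩ : ∃ s', s = s' + 1 := ⟨s - 1, by omega⟩
  rw [Nat.mul_succ] at hs
  -- hs : n - i = p * s' + p
  have hkey : 2 * j ≤ p + i + 1 := by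
    by_contra hcon
    push_neg at hcon
    have h1 : n - (p + i) = p * s' := by omega
    have := huniq (p + i) (by omega) ⟨s', h1⟩
    omega
  have hiff : ∀ m, m ≤ j → (pDom p (j - m) (n - 2 * m) ↔ (i < 2 * m ∨ m + j ≤ i)) := by
    intro m hm
    by_cases hjm : j - m < p
    · rw [pdom_iff_of_lt hp2 hjm]
      by_cases h2m : 2 * m ≤ i
      · have h1 : n - 2 * m = (n - i) + (i - 2 * m) := by omega
        rw [h1, hs, add_assoc, Nat.mul_add_mod, Nat.add_mod_left,
          Nat.mod_eq_of_lt (by omega : i - 2 * m < p)]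
        omega
      · have h1 : n - 2 * m + p * 2 = (n - i) + (2 * p - (2 * m - i)) := by omega
        have h2 : (n - 2 * m) % p = (2 * p - (2 * m - i)) % p := by
          calc (n - 2 * m) % p = (n - 2 * m + p * 2) % p :=
                (Nat.add_mul_mod_self_left _ _ _).symm
            _ = ((n - i) + (2 * p - (2 * m - i))) % p := by rw [h1]
            _ = (2 * p - (2 * m - i)) % p := by
                rw [hs, add_assoc, Nat.mul_add_mod, Nat.add_mod_left]
        by_cases hep : p ≤ 2 * p - (2 * m - i)
        · rw [h2, Nat.mod_eq_sub_mod hep, Nat.mod_eq_of_lt (by omega)]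
          omega
        · rw [h2, Nat.mod_eq_of_lt (by omega)]
          omega
    · -- j - m ≥ p forces m = 0, j = p
      have hm0 : m = 0 ∧ j = p := by omega
      rcases hcase with h | ⟨hjpe, hsq⟩
      · omega
      obtain ⟨t, ht⟩ := hsq
      have hR : ¬(i < 2 * m ∨ m + j ≤ i) := by omega
      have hG : n = p * (p * t) + (p - 1) := by
        have h3 : k + 1 = p * (p * t) := by rw [ht]; ring
        omega
      have hnd : ¬ pDom p (j - m) (n - 2 * m) := by
        intro hdom
        have h1 := hdom 1
        rw [digits_getD_eq p hp2, digits_getD_eq p hp2] at h1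
        have hjm' : j - m = p := by omega
        have hnm : n - 2 * m = n := by omega
        rw [hjm', hnm, pow_one, Nat.div_self (by omega : 0 < p)] at h1
        have hnp : n / p % p = 0 := by
          rw [hG, Nat.mul_add_div (by omega : 0 < p),
            Nat.div_eq_of_lt (by omega : p - 1 < p), Nat.add_zero, Nat.mul_mod_right]
        rw [hnp, Nat.mod_eq_of_lt (by omega : 1 < p)] at h1
        omega
      exact iff_of_false hnd hR
  have hset : (Finset.range (j + 1)).filter (fun m => pDom p (j - m) (n - 2 * m)) =
      (Finset.range (j + 1)).filter (fun m => i < 2 * m ∨ m + j ≤ i) := by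
    ext m
    simp only [Finset.mem_filter, Finset.mem_range]
    exact and_congr_right fun hm => hiff m (by omega)
  rw [hset]
  have hset2 : (Finset.range (j + 1)).filter (fun m => i < 2 * m ∨ m + j ≤ i) =
      (if j ≤ i then Finset.range (i - j + 1) else ∅) ∪ Finset.Ico (i / 2 + 1) (j + 1) := by
    ext m
    by_cases hji : j ≤ i <;>
      simp only [hji, if_true, if_false, Finset.mem_filter, Finset.mem_range,
        Finset.mem_union, Finset.mem_Ico, Finset.notMem_empty, false_or] <;>
      omega
  rw [hset2, Finset.card_union_of_disjoint]
  · by_cases hji : j ≤ i <;>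
      simp only [hji, if_true, if_false, Finset.card_range, Finset.card_empty, Nat.card_Ico] <;>
      omega
  · rw [Finset.disjoint_left]
    intro a ha hb
    rw [Finset.mem_Ico] at hb
    split_ifs at ha with h
    · rw [Finset.mem_range] at ha; omega
    · simp at ha
end
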